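/- There is no probability measure on {−1,1}³ whose coordinate random variables X, Y, Z satisfy E[X] = E[Y] = E[Z] = 0 and E[XY] = E[YZ] = E[XZ] = −1/2, even though these moment values satisfy Bell's original inequality 1 + E[YZ] ≥ |E[XY] − E[XZ]| (since 1/2 ≥ 0). Hence Bell's original inequality is not sufficient for the existence of a joint probability distribution of three ±1-valued random variables with zero means. -/
import Mathlib


/-- The sample space `{-1,1}³` with coordinates `X, Y, Z`. -/
abbrev SignTriple : Type := ({-1, 1} : Finset ℝ) × ({-1, 1} : Finset ℝ) × ({-1, 1} : Finset ℝ)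

/-- Bell's original inequality `1 + E[YZ] ≥ |E[XY] - E[XZ]|` is satisfied by the moment
values `E[XY] = E[YZ] = E[XZ] = -1/2`, yet no joint probability distribution on `{-1,1}³`
with zero means realizes these moments: Bell's original inequality is not sufficient for
the existence of a joint distribution. -/
theorem bell_original_not_sufficient :
    (1 + (-1/2 : ℝ) ≥ |(-1/2 : ℝ) - (-1/2)|) ∧
    ¬ ∃ p : SignTriple → ℝ,
      (∀ s, 0 ≤ p s) ∧ (∑ s, p s = 1) ∧
      (∑ s, p s * (s.1 : ℝ)) = 0 ∧
      (∑ s, p s * (s.2.1 : ℝ)) = 0 ∧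
      (∑ s, p s * (s.2.2 : ℝ)) = 0 ∧
      (∑ s, p s * ((s.1 : ℝ) * (s.2.1 : ℝ))) = -1/2 ∧
      (∑ s, p s * ((s.2.1 : ℝ) * (s.2.2 : ℝ))) = -1/2 ∧
      (∑ s, p s * ((s.1 : ℝ) * (s.2.2 : ℝ))) = -1/2 := by
  constructor
  · norm_num
  · rintro ⟨p, hp, hsum, _, _, _, hxy, hyz, hxz⟩
    have key : ∀ s : SignTriple,
        -(p s) ≤ p s * ((s.1 : ℝ) * s.2.1) + p s * ((s.2.1 : ℝ) * s.2.2)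
          + p s * ((s.1 : ℝ) * s.2.2) := by
      intro s
      have hps := hp s
      obtain ⟨⟨x, hx⟩, ⟨y, hy⟩, ⟨z, hz⟩⟩ := s
      simp only [Finset.mem_insert, Finset.mem_singleton] at hx hy hz
      rcases hx with rfl | rfl <;> rcases hy with rfl | rfl <;>
        rcases hz with rfl | rfl <;> simp only at hps ⊢ <;> norm_num <;> linarith
    have h1 : (-1 : ℝ) ≤ -3/2 := by
      calc (-1 : ℝ) = ∑ s : SignTriple, -(p s) := by
            rw [Finset.sum_neg_distrib, hsum]
        _ ≤ ∑ s : SignTriple, (p s * ((s.1 : ℝ) * s.2.1)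
              + p s * ((s.2.1 : ℝ) * s.2.2) + p s * ((s.1 : ℝ) * s.2.2)) :=
            Finset.sum_le_sum fun s _ => key s
        _ = -3/2 := by rw [Finset.sum_add_distrib, Finset.sum_add_distrib, hxy, hyz, hxz]; norm_num
    linarith
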